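/- Work in the quaternion algebra B = ℍ[ℚ, −1, −1] (the rational quaternions), and let O be the Hurwitz order, i.e., the ℤ-span of {1, i, j, (1 + i + j + k)/2}. Let O^T = {2x − trd(x) : x ∈ O} be its Gross lattice, and set β₁ = i + j + k, β₂ = i + j − k, β₃ = i − j + k. Then: (a) O^T equals the ℤ-span of {β₁, β₂, β₃}; (b) with pairing (x, y) = (1/2)·trd(x·ȳ), the Gram matrix of (β₁, β₂, β₃) is [[3, 1, 1], [1, 3, −1], [1, −1, 3]]; (c) O^T is well-rounded: every nonzero element of O^T has nrd ≥ 3, and β₁, β₂, β₃ are three ℝ-linearly independent elements of nrd exactly 3, so all three successive minima equal 3; and (d) O^T has no orthogonal ℤ-basis, i.e., there is no ℤ-basis (γ₁, γ₂, γ₃) of O^T with (γ₁, γ₂) = (γ₁, γ₃) = (γ₂, γ₃) = 0. -/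

import Mathlib

open scoped Quaternion

private lemma key_int (X Y Z : ℤ) (h : ¬(X = 0 ∧ Y = 0 ∧ Z = 0))
    (hXY : (X - Y) % 2 = 0) (hXZ : (X - Z) % 2 = 0) : 3 ≤ X^2 + Y^2 + Z^2 := by
  have sq1 : ∀ n : ℤ, n ≠ 0 → 1 ≤ n^2 := by
    intro n hn
    rcases lt_or_gt_of_ne hn with h | h <;> nlinarith
  rcases Int.emod_two_eq X with hX | hX
  · obtain ⟨x, hx⟩ : ∃ x, X = 2*x := ⟨X/2, by omega⟩
    obtain ⟨y, hy⟩ : ∃ y, Y = 2*y := ⟨Y/2, by omega⟩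
    obtain ⟨z, hz⟩ : ∃ z, Z = 2*z := ⟨Z/2, by omega⟩
    subst hx hy hz
    have hne : x ≠ 0 ∨ y ≠ 0 ∨ z ≠ 0 := by omega
    rcases hne with h' | h' | h'
    · have := sq1 x h'; nlinarith [sq_nonneg y, sq_nonneg z]
    · have := sq1 y h'; nlinarith [sq_nonneg x, sq_nonneg z]
    · have := sq1 z h'; nlinarith [sq_nonneg x, sq_nonneg y]
  · have h1 := sq1 X (by omega)
    have h2 := sq1 Y (by omega)
    have h3 := sq1 Z (by omega)
    linarith

private lemma bilin (u v w : ℍ[ℚ,-1,-1]) (a b c a' b' c' : ℚ)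
    (h12 : (u * star v).re = 0) (h13 : (u * star w).re = 0) (h23 : (v * star w).re = 0) :
    ((a • u + b • v + c • w) * star (a' • u + b' • v + c' • w)).re
      = a*a'*(u*star u).re + b*b'*(v*star v).re + c*c'*(w*star w).re := by
  obtain ⟨u1,u2,u3,u4⟩ := u; obtain ⟨v1,v2,v3,v4⟩ := v; obtain ⟨w1,w2,w3,w4⟩ := w
  simp only [QuaternionAlgebra.smul_mk, QuaternionAlgebra.mk_add_mk, QuaternionAlgebra.star_mk,
    QuaternionAlgebra.re_mul, smul_eq_mul] at h12 h13 h23 ⊢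
  linear_combination (a*b' + b*a') * h12 + (a*c' + c*a') * h13 + (b*c' + c*b') * h23

private lemma tripleRange (x y z : ℍ[ℚ,-1,-1]) :
    ({x, y, z} : Set ℍ[ℚ,-1,-1]) = Set.range ![x, y, z] := by
  ext w
  simp [Matrix.range_cons, Matrix.range_empty]
  tauto

set_option maxHeartbeats 2000000 in
/-- The Gross lattice of the Hurwitz order `O = ⟨1, i, j, (1+i+j+k)/2⟩` in `ℍ[ℚ, -1, -1]`
is spanned by `β₁ = i+j+k`, `β₂ = i+j-k`, `β₃ = i-j+k`; the Gram matrix of this basis (for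
the pairing `(x,y) = (1/2)·trd(x·ȳ)`) is `[[3, 1, 1], [1, 3, -1], [1, -1, 3]]`; the lattice
is well-rounded with all successive minima equal to `3`; and it admits no orthogonal
`ℤ`-basis. -/
theorem stmt_15 (i j k : ℍ[ℚ, -1, -1])
    (hi : i = ⟨0, 1, 0, 0⟩) (hj : j = ⟨0, 0, 1, 0⟩) (hk : k = i * j)
    (O : Submodule ℤ ℍ[ℚ, -1, -1])
    (hO : O = Submodule.span ℤ
      ({1, i, j, ((1 : ℚ)/2) • (1 + i + j + k)} : Set ℍ[ℚ, -1, -1]))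
    (β₁ β₂ β₃ : ℍ[ℚ, -1, -1])
    (hβ₁ : β₁ = i + j + k) (hβ₂ : β₂ = i + j - k) (hβ₃ : β₃ = i - j + k) :
    -- (a) the Gross lattice of `O` is spanned by `β₁, β₂, β₃`
    {y | ∃ x ∈ O, y = 2 * x - (x + star x)} =
      (Submodule.span ℤ ({β₁, β₂, β₃} : Set ℍ[ℚ, -1, -1]) : Set ℍ[ℚ, -1, -1]) ∧
    -- (b) the Gram matrix of `(β₁, β₂, β₃)`
    (β₁ * star β₁).re = 3 ∧ (β₁ * star β₂).re = 1 ∧ (β₁ * star β₃).re = 1 ∧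
    (β₂ * star β₂).re = 3 ∧ (β₂ * star β₃).re = -1 ∧ (β₃ * star β₃).re = 3 ∧
    -- (c) the lattice is well-rounded: all three successive minima equal 3
    LinearIndependent ℚ ![β₁, β₂, β₃] ∧
    (∀ w ∈ Submodule.span ℤ ({β₁, β₂, β₃} : Set ℍ[ℚ, -1, -1]), w ≠ 0 →
      3 ≤ (w * star w).re) ∧
    -- (d) no orthogonal `ℤ`-basis
    ¬ ∃ γ₁ γ₂ γ₃ : ℍ[ℚ, -1, -1],
      Submodule.span ℤ ({γ₁, γ₂, γ₃} : Set ℍ[ℚ, -1, -1]) =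
        Submodule.span ℤ ({β₁, β₂, β₃} : Set ℍ[ℚ, -1, -1]) ∧
      LinearIndependent ℤ ![γ₁, γ₂, γ₃] ∧
      (γ₁ * star γ₂).re = 0 ∧ (γ₁ * star γ₃).re = 0 ∧ (γ₂ * star γ₃).re = 0 := by
  subst hk hi hj
  have hb1 : β₁ = (⟨0,1,1,1⟩ : ℍ[ℚ,-1,-1]) := by rw [hβ₁]; ext <;> simp
  have hb2 : β₂ = (⟨0,1,1,-1⟩ : ℍ[ℚ,-1,-1]) := by rw [hβ₂]; ext <;> simp
  have hb3 : β₃ = (⟨0,1,-1,1⟩ : ℍ[ℚ,-1,-1]) := by rw [hβ₃]; ext <;> simp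
  subst hb1 hb2 hb3
  have hω : ((1 : ℚ)/2) • ((1 : ℍ[ℚ,-1,-1]) + ⟨0,1,0,0⟩ + ⟨0,0,1,0⟩ + ⟨0,1,0,0⟩ * ⟨0,0,1,0⟩)
      = (⟨1/2,1/2,1/2,1/2⟩ : ℍ[ℚ,-1,-1]) := by ext <;> norm_num
  rw [hω] at hO
  subst hO
  -- part (c2): minimal norm 3
  have hmin : ∀ w ∈ Submodule.span ℤ
      ({⟨0,1,1,1⟩, ⟨0,1,1,-1⟩, ⟨0,1,-1,1⟩} : Set ℍ[ℚ,-1,-1]), w ≠ 0 → 3 ≤ (w * star w).re := by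
    intro w hw hw0
    rw [tripleRange, Submodule.mem_span_range_iff_exists_fun] at hw
    obtain ⟨c, hc⟩ := hw
    rw [Fin.sum_univ_three] at hc
    simp only [Matrix.cons_val_zero, Matrix.cons_val_one, Matrix.head_cons,
      Matrix.cons_val_two, Matrix.tail_cons] at hc
    have hcomp : (w * star w).re = ((c 0 + c 1 + c 2 : ℤ) : ℚ)^2
        + ((c 0 + c 1 - c 2 : ℤ) : ℚ)^2 + ((c 0 - c 1 + c 2 : ℤ) : ℚ)^2 := by
      rw [← hc]
      simp only [← Int.cast_smul_eq_zsmul ℚ]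
      simp only [QuaternionAlgebra.smul_mk, QuaternionAlgebra.mk_add_mk,
        QuaternionAlgebra.star_mk, QuaternionAlgebra.re_mul, smul_eq_mul]
      push_cast
      ring
    have hnz : ¬((c 0 + c 1 + c 2) = 0 ∧ (c 0 + c 1 - c 2) = 0 ∧ (c 0 - c 1 + c 2) = 0) := by
      rintro ⟨h1, h2, h3⟩
      apply hw0
      rw [← hc]
      have e0 : c 0 = 0 := by omega
      have e1 : c 1 = 0 := by omega
      have e2 : c 2 = 0 := by omega
      rw [e0, e1, e2]
      simp
    have hk := key_int _ _ _ hnz (by omega) (by omega)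
    rw [hcomp]
    exact_mod_cast hk
  -- part (c1): linear independence
  have hli : LinearIndependent ℚ ![(⟨0,1,1,1⟩ : ℍ[ℚ,-1,-1]), ⟨0,1,1,-1⟩, ⟨0,1,-1,1⟩] := by
    rw [Fintype.linearIndependent_iff]
    intro g hg
    rw [Fin.sum_univ_three] at hg
    simp only [Matrix.cons_val_zero, Matrix.cons_val_one, Matrix.head_cons,
      Matrix.cons_val_two, Matrix.tail_cons] at hg
    rw [QuaternionAlgebra.ext_iff] at hg
    simp only [QuaternionAlgebra.smul_mk, QuaternionAlgebra.mk_add_mk, smul_eq_mul,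
      QuaternionAlgebra.re_zero, QuaternionAlgebra.imI_zero, QuaternionAlgebra.imJ_zero,
      QuaternionAlgebra.imK_zero] at hg
    obtain ⟨-, h1, h2, h3⟩ := hg
    have e0 : g 0 = 0 := by linarith
    have e1 : g 1 = 0 := by linarith
    have e2 : g 2 = 0 := by linarith
    intro idx
    fin_cases idx
    · exact e0
    · exact e1
    · exact e2
  refine ⟨?_, ?_, ?_, ?_, ?_, ?_, ?_, hli, hmin, ?_⟩
  -- part (a)
  · have hrange := tripleRange (⟨0,1,1,1⟩ : ℍ[ℚ,-1,-1]) ⟨0,1,1,-1⟩ ⟨0,1,-1,1⟩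
    have h2 : ∀ z : ℍ[ℚ,-1,-1], 2*z - (z + star z) = z - star z := fun z => by
      rw [two_mul]; abel
    simp only [h2]
    ext y
    simp only [Set.mem_setOf_eq, SetLike.mem_coe]
    constructor
    · rintro ⟨x, hx, rfl⟩
      refine Submodule.span_induction ?_ ?_ ?_ ?_ hx
      · rintro g hg
        simp only [Set.mem_insert_iff, Set.mem_singleton_iff] at hg
        rcases hg with rfl | rfl | rfl | rfl
        · simp
        · have : (⟨0,1,0,0⟩ : ℍ[ℚ,-1,-1]) - star ⟨0,1,0,0⟩
              = (⟨0,1,1,-1⟩ : ℍ[ℚ,-1,-1]) + ⟨0,1,-1,1⟩ := by ext <;> simp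
          rw [this]
          exact add_mem (Submodule.subset_span (by simp)) (Submodule.subset_span (by simp))
        · have : (⟨0,0,1,0⟩ : ℍ[ℚ,-1,-1]) - star ⟨0,0,1,0⟩
              = (⟨0,1,1,1⟩ : ℍ[ℚ,-1,-1]) - ⟨0,1,-1,1⟩ := by ext <;> simp
          rw [this]
          exact sub_mem (Submodule.subset_span (by simp)) (Submodule.subset_span (by simp))
        · have : (⟨1/2,1/2,1/2,1/2⟩ : ℍ[ℚ,-1,-1]) - star ⟨1/2,1/2,1/2,1/2⟩
              = (⟨0,1,1,1⟩ : ℍ[ℚ,-1,-1]) := by ext <;> norm_num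
          rw [this]
          exact Submodule.subset_span (by simp)
      · simp
      · intro x y _ _ hx hy
        have : (x + y) - star (x + y) = (x - star x) + (y - star y) := by
          rw [star_add]; abel
        rw [this]; exact add_mem hx hy
      · intro n x _ hx
        have : (n • x) - star (n • x) = n • (x - star x) := by
          rw [star_smul, smul_sub]; simp
        rw [this]; exact Submodule.smul_mem _ _ hx
    · intro hy
      rw [hrange, Submodule.mem_span_range_iff_exists_fun] at hy
      obtain ⟨c, hc⟩ := hy
      rw [Fin.sum_univ_three] at hc
      simp only [Matrix.cons_val_zero, Matrix.cons_val_one, Matrix.head_cons,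
        Matrix.cons_val_two, Matrix.tail_cons] at hc
      refine ⟨c 1 • ⟨0,1,0,0⟩ + (c 1 - c 2) • ⟨0,0,1,0⟩ + (c 0 - c 1 + c 2) • ⟨1/2,1/2,1/2,1/2⟩,
        ?_, ?_⟩
      · exact add_mem (add_mem (Submodule.smul_mem _ _ (Submodule.subset_span (by simp)))
          (Submodule.smul_mem _ _ (Submodule.subset_span (by simp))))
          (Submodule.smul_mem _ _ (Submodule.subset_span (by simp)))
      · rw [← hc]
        simp only [← Int.cast_smul_eq_zsmul ℚ]
        ext <;> simp [QuaternionAlgebra.smul_mk] <;> ring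
  -- part (b)
  · norm_num [QuaternionAlgebra.re_mul, QuaternionAlgebra.star_mk]
  · norm_num [QuaternionAlgebra.re_mul, QuaternionAlgebra.star_mk]
  · norm_num [QuaternionAlgebra.re_mul, QuaternionAlgebra.star_mk]
  · norm_num [QuaternionAlgebra.re_mul, QuaternionAlgebra.star_mk]
  · norm_num [QuaternionAlgebra.re_mul, QuaternionAlgebra.star_mk]
  · norm_num [QuaternionAlgebra.re_mul, QuaternionAlgebra.star_mk]
  -- part (d)
  · rintro ⟨γ₁, γ₂, γ₃, hspan, hind, h12, h13, h23⟩
    have hg1 : γ₁ ∈ Submodule.span ℤ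
        ({⟨0,1,1,1⟩, ⟨0,1,1,-1⟩, ⟨0,1,-1,1⟩} : Set ℍ[ℚ,-1,-1]) := by
      rw [← hspan]; exact Submodule.subset_span (by simp)
    have hg2 : γ₂ ∈ Submodule.span ℤ
        ({⟨0,1,1,1⟩, ⟨0,1,1,-1⟩, ⟨0,1,-1,1⟩} : Set ℍ[ℚ,-1,-1]) := by
      rw [← hspan]; exact Submodule.subset_span (by simp)
    have hg3 : γ₃ ∈ Submodule.span ℤ
        ({⟨0,1,1,1⟩, ⟨0,1,1,-1⟩, ⟨0,1,-1,1⟩} : Set ℍ[ℚ,-1,-1]) := by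
      rw [← hspan]; exact Submodule.subset_span (by simp)
    have hq1 : 3 ≤ (γ₁ * star γ₁).re := hmin _ hg1 (by simpa using hind.ne_zero 0)
    have hq2 : 3 ≤ (γ₂ * star γ₂).re := hmin _ hg2 (by simpa using hind.ne_zero 1)
    have hq3 : 3 ≤ (γ₃ * star γ₃).re := hmin _ hg3 (by simpa using hind.ne_zero 2)
    have hb1m : (⟨0,1,1,1⟩ : ℍ[ℚ,-1,-1]) ∈ Submodule.span ℤ ({γ₁, γ₂, γ₃} : Set ℍ[ℚ,-1,-1]) := by
      rw [hspan]; exact Submodule.subset_span (by simp)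
    have hb2m : (⟨0,1,1,-1⟩ : ℍ[ℚ,-1,-1]) ∈ Submodule.span ℤ ({γ₁, γ₂, γ₃} : Set ℍ[ℚ,-1,-1]) := by
      rw [hspan]; exact Submodule.subset_span (by simp)
    rw [tripleRange, Submodule.mem_span_range_iff_exists_fun] at hb1m hb2m
    obtain ⟨a, ha⟩ := hb1m
    obtain ⟨e, he⟩ := hb2m
    rw [Fin.sum_univ_three] at ha he
    simp only [Matrix.cons_val_zero, Matrix.cons_val_one, Matrix.head_cons,
      Matrix.cons_val_two, Matrix.tail_cons] at ha he
    simp only [← Int.cast_smul_eq_zsmul ℚ] at ha he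
    -- norm equations
    have E1 : ((a 0 : ℚ)) * (a 0 : ℚ) * (γ₁ * star γ₁).re
        + (a 1 : ℚ) * (a 1 : ℚ) * (γ₂ * star γ₂).re
        + (a 2 : ℚ) * (a 2 : ℚ) * (γ₃ * star γ₃).re = 3 := by
      rw [← bilin γ₁ γ₂ γ₃ _ _ _ _ _ _ h12 h13 h23, ha]
      norm_num [QuaternionAlgebra.re_mul, QuaternionAlgebra.star_mk]
    have E2 : ((e 0 : ℚ)) * (e 0 : ℚ) * (γ₁ * star γ₁).re
        + (e 1 : ℚ) * (e 1 : ℚ) * (γ₂ * star γ₂).re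
        + (e 2 : ℚ) * (e 2 : ℚ) * (γ₃ * star γ₃).re = 3 := by
      rw [← bilin γ₁ γ₂ γ₃ _ _ _ _ _ _ h12 h13 h23, he]
      norm_num [QuaternionAlgebra.re_mul, QuaternionAlgebra.star_mk]
    have hdiff : (((a 0 : ℚ) - (e 0 : ℚ)) • γ₁ + ((a 1 : ℚ) - (e 1 : ℚ)) • γ₂
        + ((a 2 : ℚ) - (e 2 : ℚ)) • γ₃)
        = (⟨0,1,1,1⟩ : ℍ[ℚ,-1,-1]) - ⟨0,1,1,-1⟩ := by
      rw [← ha, ← he]; module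
    have Ed : ((a 0 : ℚ) - (e 0 : ℚ)) * ((a 0 : ℚ) - (e 0 : ℚ)) * (γ₁ * star γ₁).re
        + ((a 1 : ℚ) - (e 1 : ℚ)) * ((a 1 : ℚ) - (e 1 : ℚ)) * (γ₂ * star γ₂).re
        + ((a 2 : ℚ) - (e 2 : ℚ)) * ((a 2 : ℚ) - (e 2 : ℚ)) * (γ₃ * star γ₃).re = 4 := by
      rw [← bilin γ₁ γ₂ γ₃ _ _ _ _ _ _ h12 h13 h23, hdiff]
      norm_num [QuaternionAlgebra.re_mul, QuaternionAlgebra.star_mk, QuaternionAlgebra.mk_sub_mk]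
    have one_le_sq : ∀ n : ℤ, n ≠ 0 → 1 ≤ n^2 := by
      intro n hn
      rcases lt_or_gt_of_ne hn with h | h <;> nlinarith
    -- the coefficient vectors have squared length 1
    have sumsq : ∀ (c : Fin 3 → ℤ), ((c 0 : ℚ)) * (c 0 : ℚ) * (γ₁ * star γ₁).re
        + (c 1 : ℚ) * (c 1 : ℚ) * (γ₂ * star γ₂).re
        + (c 2 : ℚ) * (c 2 : ℚ) * (γ₃ * star γ₃).re = 3 →
        ¬(c 0 = 0 ∧ c 1 = 0 ∧ c 2 = 0) →
        c 0 ^ 2 + c 1 ^ 2 + c 2 ^ 2 = 1 := by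
      intro c hE hne
      have n1 : (0:ℚ) ≤ (c 0 : ℚ)^2 * ((γ₁ * star γ₁).re - 3) :=
        mul_nonneg (sq_nonneg _) (by linarith)
      have n2 : (0:ℚ) ≤ (c 1 : ℚ)^2 * ((γ₂ * star γ₂).re - 3) :=
        mul_nonneg (sq_nonneg _) (by linarith)
      have n3 : (0:ℚ) ≤ (c 2 : ℚ)^2 * ((γ₃ * star γ₃).re - 3) :=
        mul_nonneg (sq_nonneg _) (by linarith)
      have upQ : (c 0 : ℚ)^2 + (c 1 : ℚ)^2 + (c 2 : ℚ)^2 ≤ 1 := by nlinarith [hE, n1, n2, n3]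
      have upZ : c 0 ^ 2 + c 1 ^ 2 + c 2 ^ 2 ≤ 1 := by exact_mod_cast upQ
      have lo : 1 ≤ c 0 ^ 2 + c 1 ^ 2 + c 2 ^ 2 := by
        have hne' : c 0 ≠ 0 ∨ c 1 ≠ 0 ∨ c 2 ≠ 0 := by tauto
        rcases hne' with h' | h' | h'
        · have := one_le_sq _ h'; nlinarith [sq_nonneg (c 1), sq_nonneg (c 2)]
        · have := one_le_sq _ h'; nlinarith [sq_nonneg (c 0), sq_nonneg (c 2)]
        · have := one_le_sq _ h'; nlinarith [sq_nonneg (c 0), sq_nonneg (c 1)]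
      omega
    have hsa : a 0 ^ 2 + a 1 ^ 2 + a 2 ^ 2 = 1 := by
      refine sumsq a E1 ?_
      rintro ⟨z0, z1, z2⟩
      rw [z0, z1, z2] at ha
      norm_num [QuaternionAlgebra.ext_iff] at ha
    have hse : e 0 ^ 2 + e 1 ^ 2 + e 2 ^ 2 = 1 := by
      refine sumsq e E2 ?_
      rintro ⟨z0, z1, z2⟩
      rw [z0, z1, z2] at he
      norm_num [QuaternionAlgebra.ext_iff] at he
    -- the difference vector is too short, hence zero
    have hdle : (a 0 - e 0) ^ 2 + (a 1 - e 1) ^ 2 + (a 2 - e 2) ^ 2 ≤ 1 := by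
      have n1 : (0:ℚ) ≤ ((a 0 : ℚ) - (e 0 : ℚ))^2 * ((γ₁ * star γ₁).re - 3) :=
        mul_nonneg (sq_nonneg _) (by linarith)
      have n2 : (0:ℚ) ≤ ((a 1 : ℚ) - (e 1 : ℚ))^2 * ((γ₂ * star γ₂).re - 3) :=
        mul_nonneg (sq_nonneg _) (by linarith)
      have n3 : (0:ℚ) ≤ ((a 2 : ℚ) - (e 2 : ℚ))^2 * ((γ₃ * star γ₃).re - 3) :=
        mul_nonneg (sq_nonneg _) (by linarith)
      have upQ : ((a 0 : ℚ) - (e 0 : ℚ))^2 + ((a 1 : ℚ) - (e 1 : ℚ))^2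
          + ((a 2 : ℚ) - (e 2 : ℚ))^2 ≤ 4/3 := by nlinarith [Ed, n1, n2, n3]
      have upQ' : (((a 0 - e 0) ^ 2 + (a 1 - e 1) ^ 2 + (a 2 - e 2) ^ 2 : ℤ) : ℚ) < 2 := by
        push_cast
        linarith
      have : (a 0 - e 0) ^ 2 + (a 1 - e 1) ^ 2 + (a 2 - e 2) ^ 2 < 2 := by exact_mod_cast upQ'
      omega
    have hpar : (a 0 - e 0) ^ 2 + (a 1 - e 1) ^ 2 + (a 2 - e 2) ^ 2
        = 2 - 2 * (a 0 * e 0 + a 1 * e 1 + a 2 * e 2) := by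
      linear_combination hsa + hse
    obtain ⟨S, hS⟩ : ∃ S, a 0 * e 0 + a 1 * e 1 + a 2 * e 2 = S := ⟨_, rfl⟩
    obtain ⟨p, hp, hp0⟩ : ∃ p, (a 0 - e 0) ^ 2 = p ∧ 0 ≤ p := ⟨_, rfl, sq_nonneg _⟩
    obtain ⟨q, hq, hq0⟩ : ∃ q, (a 1 - e 1) ^ 2 = q ∧ 0 ≤ q := ⟨_, rfl, sq_nonneg _⟩
    obtain ⟨r, hr, hr0⟩ : ∃ r, (a 2 - e 2) ^ 2 = r ∧ 0 ≤ r := ⟨_, rfl, sq_nonneg _⟩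
    rw [hS, hp, hq, hr] at hpar
    rw [hp, hq, hr] at hdle
    have hz : p = 0 ∧ q = 0 ∧ r = 0 := by omega
    have f0 : a 0 = e 0 := by
      have h0 : (a 0 - e 0) ^ 2 = 0 := by rw [hp]; exact hz.1
      have := sq_eq_zero_iff.mp h0
      omega
    have f1 : a 1 = e 1 := by
      have h0 : (a 1 - e 1) ^ 2 = 0 := by rw [hq]; exact hz.2.1
      have := sq_eq_zero_iff.mp h0
      omega
    have f2 : a 2 = e 2 := by
      have h0 : (a 2 - e 2) ^ 2 = 0 := by rw [hr]; exact hz.2.2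
      have := sq_eq_zero_iff.mp h0
      omega
    have f0' : (a 0 : ℚ) = (e 0 : ℚ) := by exact_mod_cast f0
    have f1' : (a 1 : ℚ) = (e 1 : ℚ) := by exact_mod_cast f1
    have f2' : (a 2 : ℚ) = (e 2 : ℚ) := by exact_mod_cast f2
    rw [f0', f1', f2'] at Ed
    norm_num at Ed
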